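/- Let B be a finite abelian group with an automorphism β, and suppose 0 → A →^f B →^g C → 0 is an exact sequence of finite abelian groups such that β restricts along f to an automorphism α of A (i.e. β(f(A)) = f(A) and β∘f = f∘α). Then β induces an automorphism γ of C with γ∘g = g∘β, and if #C is odd then (β, B) = (α, A)·(γ, C)^{#A}. -/

import Mathlib

private lemma sign_addLeft_sum {G ι : Type*} [AddCommGroup G] [Fintype G] [DecidableEq G]
    (s : Finset ι) (t : ι → G) :
    Equiv.Perm.sign (Equiv.addLeft (∑ i ∈ s, t i)) =
      ∏ i ∈ s, Equiv.Perm.sign (Equiv.addLeft (t i)) := by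
  classical
  induction s using Finset.induction with
  | empty => simp
  | insert _ _ h ih =>
      rw [Finset.sum_insert h, Equiv.addLeft_add, map_mul, ih, Finset.prod_insert h]

private lemma units_pow_odd (u : ℤˣ) {n : ℕ} (hn : Odd n) : u ^ n = u := by
  obtain ⟨k, rfl⟩ := hn
  rw [pow_add, pow_mul, Int.units_sq, one_pow, pow_one, one_mul]

/-- Let `B` be a finite abelian group with automorphism `β`, and
`0 → A → B → C → 0` an exact sequence of finite abelian groups such that `β`
restricts along `f` to an automorphism `α` of `A`. Then `β` induces an
automorphism `γ` of `C` with `γ∘g = g∘β`, and if `#C` is odd then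
`(β, B) = (α, A)·(γ, C)^{#A}`, signs being taken as permutations of the
underlying finite sets. -/
theorem stmt_18 {A B C : Type*}
    [AddCommGroup A] [AddCommGroup B] [AddCommGroup C]
    [Fintype A] [Fintype B] [Fintype C]
    [DecidableEq A] [DecidableEq B] [DecidableEq C]
    (f : A →+ B) (g : B →+ C)
    (hf : Function.Injective f) (hg : Function.Surjective g)
    (hexact : ∀ b : B, g b = 0 ↔ b ∈ Set.range f)
    (β : B ≃+ B) (α : A ≃+ A)
    (hcomm : ∀ a : A, β (f a) = f (α a)) :
    ∃ γ : C ≃+ C, (∀ b : B, γ (g b) = g (β b)) ∧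
      (Odd (Fintype.card C) →
        Equiv.Perm.sign β.toEquiv =
          Equiv.Perm.sign α.toEquiv * (Equiv.Perm.sign γ.toEquiv) ^ (Fintype.card A)) := by
  classical
  have hgf : ∀ a : A, g (f a) = 0 := fun a => (hexact (f a)).2 ⟨a, rfl⟩
  set s : C → B := Function.surjInv hg with hs_def
  have hs : ∀ c, g (s c) = c := fun c => Function.surjInv_eq hg c
  have hcomm' : ∀ a : A, β.symm (f a) = f (α.symm a) := by
    intro a
    apply β.injective
    rw [AddEquiv.apply_symm_apply, hcomm, AddEquiv.apply_symm_apply]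
  have key : ∀ (β' : B ≃+ B), (∀ a : A, ∃ a', β' (f a) = f a') →
      ∀ b b' : B, g b = g b' → g (β' b) = g (β' b') := by
    intro β' hpres b b' h
    obtain ⟨a, ha⟩ := (hexact (b - b')).1 (by rw [map_sub, h, sub_self])
    obtain ⟨a', ha'⟩ := hpres a
    have h2 : g (β' b) - g (β' b') = 0 := by
      rw [← map_sub, ← map_sub, ← ha, ha', hgf]
    exact sub_eq_zero.mp h2
  have keyβ := key β (fun a => ⟨α a, hcomm a⟩)
  have keyβ' := key β.symm (fun a => ⟨α.symm a, hcomm' a⟩)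
  set γfun : C → C := fun c => g (β (s c)) with hγfun_def
  set δfun : C → C := fun c => g (β.symm (s c)) with hδfun_def
  have hγg : ∀ b : B, γfun (g b) = g (β b) := fun b => keyβ _ _ (hs (g b))
  have hδg : ∀ b : B, δfun (g b) = g (β.symm b) := fun b => keyβ' _ _ (hs (g b))
  have hli : ∀ c, δfun (γfun c) = c := by
    intro c
    show δfun (g (β (s c))) = c
    rw [hδg, AddEquiv.symm_apply_apply, hs]
  have hri : ∀ c, γfun (δfun c) = c := by
    intro c
    show γfun (g (β.symm (s c))) = c
    rw [hγg, AddEquiv.apply_symm_apply, hs]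
  have hadd : ∀ c₁ c₂, γfun (c₁ + c₂) = γfun c₁ + γfun c₂ := by
    intro c₁ c₂
    have h1 : g (s c₁ + s c₂) = c₁ + c₂ := by rw [map_add, hs, hs]
    have h2 : γfun (c₁ + c₂) = γfun (g (s c₁ + s c₂)) := by rw [h1]
    rw [h2, hγg, map_add, map_add]
  set Γ : C ≃+ C :=
    { toFun := γfun, invFun := δfun, left_inv := hli, right_inv := hri,
      map_add' := hadd } with hΓ_def
  refine ⟨Γ, fun b => hγg b, ?_⟩
  intro hodd
  -- the bijection E : C × A ≃ B
  have hbij : Function.Bijective (fun p : C × A => s p.1 + f p.2) := by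
    constructor
    · rintro ⟨c, a⟩ ⟨c', a'⟩ h
      simp only at h
      have hc : c = c' := by
        have := congrArg g h
        simpa [map_add, hs, hgf] using this
      subst hc
      exact Prod.ext rfl (hf (add_left_cancel h))
    · intro b
      obtain ⟨a, ha⟩ := (hexact (b - s (g b))).1 (by rw [map_sub, hs, sub_self])
      exact ⟨(g b, a), by simp [ha]⟩
  set E : C × A ≃ B := Equiv.ofBijective _ hbij with hE_def
  have hE : ∀ (c : C) (a : A), E (c, a) = s c + f a := fun c a => rfl
  -- the translation elements
  have hmem : ∀ c : C, ∃ a : A, f a = β (s c) - s (γfun c) := by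
    intro c
    obtain ⟨a, ha⟩ := (hexact (β (s c) - s (γfun c))).1 (by rw [map_sub, hs]; exact sub_self _)
    exact ⟨a, ha⟩
  set t : C → A := fun c => (hmem c).choose with ht_def
  have ht : ∀ c, f (t c) = β (s c) - s (γfun c) := fun c => (hmem c).choose_spec
  set σ : C → Equiv.Perm A := fun c => α.toEquiv.trans (Equiv.addLeft (t c)) with hσ_def
  have hP : E.symm.permCongr β.toEquiv =
      (Equiv.prodCongrLeft fun _ : A => Γ.toEquiv) * (Equiv.prodCongrRight σ) := by
    apply Equiv.ext
    rintro ⟨c, a⟩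
    show E.symm (β (E (c, a))) = _
    have hrhs : ((Equiv.prodCongrLeft fun _ : A => Γ.toEquiv) *
        (Equiv.prodCongrRight σ)) (c, a) = (γfun c, t c + α a) := rfl
    rw [hrhs, Equiv.symm_apply_eq, hE, hE, map_add, hcomm, map_add, ht]
    abel
  -- sign of translations on A
  have hεconj : ∀ x : A, Equiv.Perm.sign (Equiv.addLeft (f x) : Equiv.Perm B) =
      (Equiv.Perm.sign (Equiv.addLeft x : Equiv.Perm A)) ^ Fintype.card C := by
    intro x
    have hc : E.symm.permCongr (Equiv.addLeft (f x)) =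
        Equiv.prodCongrRight (fun _ : C => Equiv.addLeft x) := by
      apply Equiv.ext
      rintro ⟨c, a⟩
      show E.symm (f x + E (c, a)) = (c, x + a)
      rw [Equiv.symm_apply_eq, hE, hE, map_add]
      abel
    calc Equiv.Perm.sign (Equiv.addLeft (f x) : Equiv.Perm B)
        = Equiv.Perm.sign (E.symm.permCongr (Equiv.addLeft (f x))) :=
          (Equiv.Perm.sign_permCongr _ _).symm
      _ = ∏ _c : C, Equiv.Perm.sign (Equiv.addLeft x : Equiv.Perm A) := by
          rw [hc, Equiv.Perm.sign_prodCongrRight]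
      _ = (Equiv.Perm.sign (Equiv.addLeft x : Equiv.Perm A)) ^ Fintype.card C := by
          rw [Finset.prod_const, Finset.card_univ]
  have hβconj : ∀ b : B, Equiv.Perm.sign (Equiv.addLeft (β b)) =
      Equiv.Perm.sign (Equiv.addLeft b) := by
    intro b
    have hc : Equiv.addLeft (β b) = β.toEquiv.permCongr (Equiv.addLeft b) := by
      apply Equiv.ext
      intro x
      show β b + x = β (b + β.symm x)
      rw [map_add, AddEquiv.apply_symm_apply]
    rw [hc, Equiv.Perm.sign_permCongr]
  set T : A := ∑ c : C, t c with hT_def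
  set S : B := ∑ c : C, s c with hS_def
  have hfT : f T = β S - S := by
    rw [hT_def, map_sum, hS_def, map_sum]
    have h1 : ∑ c : C, f (t c) = ∑ c : C, (β (s c) - s (γfun c)) :=
      Finset.sum_congr rfl fun c _ => ht c
    rw [h1, Finset.sum_sub_distrib]
    congr 1
    exact Equiv.sum_comp Γ.toEquiv s
  have hηmul : ∀ x y : B, Equiv.Perm.sign (Equiv.addLeft (x + y)) =
      Equiv.Perm.sign (Equiv.addLeft x) * Equiv.Perm.sign (Equiv.addLeft y) := by
    intro x y; rw [Equiv.addLeft_add, map_mul]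
  have hηfT : Equiv.Perm.sign (Equiv.addLeft (f T) : Equiv.Perm B) = 1 := by
    rw [hfT, sub_eq_add_neg]
    calc Equiv.Perm.sign (Equiv.addLeft (β S + -S))
        = Equiv.Perm.sign (Equiv.addLeft (β S)) * Equiv.Perm.sign (Equiv.addLeft (-S)) :=
          hηmul _ _
      _ = Equiv.Perm.sign (Equiv.addLeft S) * Equiv.Perm.sign (Equiv.addLeft (-S)) := by
          rw [hβconj]
      _ = Equiv.Perm.sign (Equiv.addLeft (S + -S)) := (hηmul _ _).symm
      _ = 1 := by rw [add_neg_cancel, Equiv.addLeft_zero, map_one]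
  have hεT : Equiv.Perm.sign (Equiv.addLeft T : Equiv.Perm A) = 1 := by
    have h := hεconj T
    rw [hηfT, units_pow_odd _ hodd] at h
    exact h.symm
  -- assemble
  have hσsign : ∀ c : C, Equiv.Perm.sign (σ c) =
      Equiv.Perm.sign (Equiv.addLeft (t c)) * Equiv.Perm.sign α.toEquiv := by
    intro c
    have : σ c = (Equiv.addLeft (t c)) * α.toEquiv := rfl
    rw [this, map_mul]
  calc Equiv.Perm.sign β.toEquiv
      = Equiv.Perm.sign (E.symm.permCongr β.toEquiv) := (Equiv.Perm.sign_permCongr _ _).symm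
    _ = Equiv.Perm.sign (Equiv.prodCongrLeft fun _ : A => Γ.toEquiv) *
        Equiv.Perm.sign (Equiv.prodCongrRight σ) := by rw [hP, map_mul]
    _ = (Equiv.Perm.sign Γ.toEquiv) ^ Fintype.card A *
        ∏ c : C, Equiv.Perm.sign (σ c) := by
        rw [Equiv.Perm.sign_prodCongrLeft, Equiv.Perm.sign_prodCongrRight,
          Finset.prod_const, Finset.card_univ]
    _ = (Equiv.Perm.sign Γ.toEquiv) ^ Fintype.card A *
        ((∏ c : C, Equiv.Perm.sign (Equiv.addLeft (t c))) *
          (Equiv.Perm.sign α.toEquiv) ^ Fintype.card C) := by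
        rw [Finset.prod_congr rfl fun c _ => hσsign c, Finset.prod_mul_distrib,
          Finset.prod_const, Finset.card_univ]
    _ = Equiv.Perm.sign α.toEquiv * (Equiv.Perm.sign Γ.toEquiv) ^ Fintype.card A := by
        rw [← sign_addLeft_sum, ← hT_def, hεT, one_mul, units_pow_odd _ hodd, mul_comm]
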